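/- arXiv:0904.3083 — 2 statements merged into one kernel-verified Lean document; each statement's English description precedes it below -/
import Mathlib

section
/- Let κ ∈ (0,1), set b(κ) := √((1−κ)/κ), c(κ) := κ^{κ/2}(1−κ)^{(1−κ)/2}, and define ζ_κ : ℝ → ℝ by ζ_κ(y) = 1/√(1+y²) if |y| < b(κ) and ζ_κ(y) = c(κ)/|y|^{1−κ} if |y| ≥ b(κ). Then for every y ∈ ℝ and every t ∈ ℝ with |t| ≥ 1 one has |t|^κ/√(t²+y²) ≤ ζ_κ(y). -/
/-- For `κ ∈ (0,1)`, with `b(κ) = √((1-κ)/κ)`, `c(κ) = κ^(κ/2)(1-κ)^((1-κ)/2)` and the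
piecewise majorant `ζ_κ`, one has `|t|^κ / √(t² + y²) ≤ ζ_κ(y)` for all `y ∈ ℝ` and `|t| ≥ 1`. -/
theorem stmt0 (κ : ℝ) (hκ : κ ∈ Set.Ioo (0 : ℝ) 1)
    (b c : ℝ)
    (hb : b = Real.sqrt ((1 - κ) / κ))
    (hc : c = κ ^ (κ / 2) * (1 - κ) ^ ((1 - κ) / 2))
    (ζ : ℝ → ℝ)
    (hζ : ∀ y : ℝ, ζ y = if |y| < b then 1 / Real.sqrt (1 + y ^ 2)
      else c / |y| ^ (1 - κ))
    (y t : ℝ) (ht : 1 ≤ |t|) :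
    |t| ^ κ / Real.sqrt (t ^ 2 + y ^ 2) ≤ ζ y := by
  obtain ⟨hκ0, hκ1⟩ := hκ
  have h1κ : (0:ℝ) < 1 - κ := by linarith
  set s := |t| with hsdef
  have hs1 : (1:ℝ) ≤ s := ht
  have hs0 : (0:ℝ) < s := by linarith
  have hts : t ^ 2 = s ^ 2 := (sq_abs t).symm
  have hsum : (0:ℝ) < s ^ 2 + y ^ 2 := by positivity
  have hAsq : (s ^ κ) ^ 2 = (s ^ 2 : ℝ) ^ κ := by
    rw [sq, ← Real.rpow_add hs0, ← Real.rpow_natCast s 2, ← Real.rpow_mul hs0.le]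
    norm_num [two_mul]
  rw [hζ, hts]
  split_ifs with hy
  · -- case |y| < b
    have hyb : κ * y ^ 2 ≤ 1 - κ := by
      have hb2 : b ^ 2 = (1 - κ) / κ := by
        rw [hb, Real.sq_sqrt (by positivity)]
      have hy2 : y ^ 2 ≤ (1 - κ) / κ := by
        rw [← hb2, ← sq_abs y]
        exact pow_le_pow_left₀ (abs_nonneg y) hy.le 2
      calc κ * y ^ 2 ≤ κ * ((1 - κ) / κ) := by
            exact mul_le_mul_of_nonneg_left hy2 hκ0.le
        _ = 1 - κ := by field_simp
    have hg : (s ^ 2 : ℝ) ^ κ ≤ κ * s ^ 2 + (1 - κ) := by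
      have := Real.geom_mean_le_arith_mean2_weighted hκ0.le h1κ.le
        (by positivity : (0:ℝ) ≤ s ^ 2) zero_le_one (by ring)
      simpa using this
    have hone : (1:ℝ) ≤ (s ^ 2 : ℝ) ^ κ :=
      Real.one_le_rpow (by nlinarith) hκ0.le
    rw [div_le_div_iff₀ (Real.sqrt_pos.2 hsum) (Real.sqrt_pos.2 (by positivity))]
    have hL : (0:ℝ) ≤ s ^ κ * Real.sqrt (1 + y ^ 2) := by positivity
    have hR : (0:ℝ) ≤ 1 * Real.sqrt (s ^ 2 + y ^ 2) := by positivity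
    have hsq : (s ^ κ * Real.sqrt (1 + y ^ 2)) ^ 2
        ≤ (1 * Real.sqrt (s ^ 2 + y ^ 2)) ^ 2 := by
      rw [mul_pow, mul_pow, Real.sq_sqrt (by positivity : (0:ℝ) ≤ 1 + y ^ 2),
        Real.sq_sqrt hsum.le, hAsq, one_pow, one_mul]
      nlinarith [mul_nonneg (sq_nonneg y) (sub_nonneg.2 hg),
        mul_nonneg (sub_nonneg.2 hyb) (by nlinarith : (0:ℝ) ≤ s ^ 2 - 1)]
    exact (pow_le_pow_iff_left₀ hL hR two_ne_zero).mp hsq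
  · -- case |y| ≥ b
    have hb0 : (0:ℝ) < b := by
      rw [hb]; positivity
    have hy0 : (0:ℝ) < |y| := lt_of_lt_of_le hb0 (not_lt.mp hy)
    have hc0 : (0:ℝ) < c := by
      rw [hc]; positivity
    have hc2 : c ^ 2 = κ ^ κ * (1 - κ) ^ (1 - κ) := by
      rw [hc, mul_pow, ← Real.rpow_natCast (κ ^ (κ/2)) 2,
        ← Real.rpow_natCast ((1 - κ) ^ ((1-κ)/2)) 2,
        ← Real.rpow_mul hκ0.le, ← Real.rpow_mul h1κ.le]
      norm_num
    have hBsq : (|y| ^ (1 - κ)) ^ 2 = (y ^ 2 : ℝ) ^ (1 - κ) := by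
      rw [sq, ← Real.rpow_add hy0, ← sq_abs y, ← Real.rpow_natCast (|y|) 2,
        ← Real.rpow_mul (abs_nonneg y)]
      norm_num [two_mul]
    have hg : (s ^ 2 : ℝ) ^ κ / κ ^ κ * ((y ^ 2 : ℝ) ^ (1 - κ) / (1 - κ) ^ (1 - κ))
        ≤ s ^ 2 + y ^ 2 := by
      have h := Real.geom_mean_le_arith_mean2_weighted hκ0.le h1κ.le
        (by positivity : (0:ℝ) ≤ s ^ 2 / κ) (by positivity : (0:ℝ) ≤ y ^ 2 / (1 - κ))
        (by ring)
      rw [Real.div_rpow (by positivity) hκ0.le,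
        Real.div_rpow (sq_nonneg y) h1κ.le] at h
      calc (s ^ 2 : ℝ) ^ κ / κ ^ κ * ((y ^ 2 : ℝ) ^ (1 - κ) / (1 - κ) ^ (1 - κ))
          ≤ κ * (s ^ 2 / κ) + (1 - κ) * (y ^ 2 / (1 - κ)) := h
        _ = s ^ 2 + y ^ 2 := by field_simp
    have hkk : (0:ℝ) < κ ^ κ * (1 - κ) ^ (1 - κ) := by positivity
    rw [div_le_div_iff₀ (Real.sqrt_pos.2 hsum) (Real.rpow_pos_of_pos hy0 _)]
    have hL : (0:ℝ) ≤ s ^ κ * |y| ^ (1 - κ) := by positivity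
    have hR : (0:ℝ) ≤ c * Real.sqrt (s ^ 2 + y ^ 2) := by positivity
    have hsq : (s ^ κ * |y| ^ (1 - κ)) ^ 2 ≤ (c * Real.sqrt (s ^ 2 + y ^ 2)) ^ 2 := by
      rw [mul_pow, mul_pow, Real.sq_sqrt hsum.le, hAsq, hBsq, hc2]
      have h2 : (s ^ 2 : ℝ) ^ κ * (y ^ 2 : ℝ) ^ (1 - κ)
          ≤ κ ^ κ * (1 - κ) ^ (1 - κ) * (s ^ 2 + y ^ 2) := by
        have := mul_le_mul_of_nonneg_left hg hkk.le
        calc (s ^ 2 : ℝ) ^ κ * (y ^ 2 : ℝ) ^ (1 - κ)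
            = κ ^ κ * (1 - κ) ^ (1 - κ) *
              ((s ^ 2 : ℝ) ^ κ / κ ^ κ * ((y ^ 2 : ℝ) ^ (1 - κ) / (1 - κ) ^ (1 - κ))) := by
              field_simp
          _ ≤ κ ^ κ * (1 - κ) ^ (1 - κ) * (s ^ 2 + y ^ 2) := this
      linarith
    exact (pow_le_pow_iff_left₀ hL hR two_ne_zero).mp hsq
end

section
/- Let ν > 0, E > 0, ω ≥ 0, and define w_ν(ω,E) := E^{1/2−ν}·((E+ω)^{ν+1/2} − E^ν·(E+ω)^{1/2}). Then for every t ≥ 0 one has ((t+E)^{−ν} − (t+E+ω)^{−ν})·(t+E+ω)^{ν+1/2} ≤ w_ν(ω,E)/√E. -/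
open Real Set

/-- Bernoulli's inequality for negative exponents: `1 - ν x ≤ (1+x)^(-ν)`. -/
lemma bern_neg {ν x : ℝ} (hν : 0 < ν) (hx : 0 ≤ x) :
    1 - ν * x ≤ (1 + x) ^ (-ν) := by
  have h1x : (0:ℝ) < 1 + x := by linarith
  rcases le_or_gt ν 1 with hν1 | hν1
  · -- (1+x)^ν ≤ 1 + νx, so (1+x)^(-ν) ≥ (1+νx)⁻¹ ≥ 1 - νx
    have h1 : (1 + x) ^ ν ≤ 1 + ν * x :=
      rpow_one_add_le_one_add_mul_self (by linarith) hν.le hν1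
    have h2 : (0:ℝ) < 1 + ν * x := by nlinarith
    have h3 : (1 + ν * x)⁻¹ ≤ (1 + x) ^ (-ν) := by
      rw [Real.rpow_neg h1x.le]
      exact inv_anti₀ (rpow_pos_of_pos h1x ν) h1
    have h4 : 1 - ν * x ≤ (1 + ν * x)⁻¹ := by
      rw [inv_eq_one_div, le_div_iff₀ h2]; nlinarith [sq_nonneg (ν*x)]
    linarith
  · -- use Bernoulli with s = -x/(1+x), p = ν ≥ 1
    have hs : -1 ≤ -x / (1 + x) := by
      rw [neg_div, neg_le_neg_iff, div_le_one h1x]; linarith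
    have h1 : 1 + ν * (-x / (1 + x)) ≤ (1 + -x / (1 + x)) ^ ν :=
      one_add_mul_self_le_rpow_one_add hs hν1.le
    have he : 1 + -x / (1 + x) = (1 + x)⁻¹ := by field_simp; ring
    rw [he] at h1
    have h2 : ((1 + x)⁻¹) ^ ν = (1 + x) ^ (-ν) := by
      rw [Real.inv_rpow h1x.le, ← Real.rpow_neg h1x.le]
    rw [h2, neg_div, mul_neg] at h1
    refine le_trans ?_ h1
    have h5 : x / (1 + x) ≤ x := by rw [div_le_iff₀ h1x]; nlinarith
    have h6 : ν * (x / (1 + x)) ≤ ν * x := mul_le_mul_of_nonneg_left h5 hν.le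
    linarith

set_option maxHeartbeats 1000000 in
/-- For `ν > 0`, `E > 0`, `ω ≥ 0` and `w_ν(ω,E) = E^(1/2-ν)((E+ω)^(ν+1/2) - E^ν (E+ω)^(1/2))`,
one has `((t+E)^(-ν) - (t+E+ω)^(-ν))·(t+E+ω)^(ν+1/2) ≤ w_ν(ω,E)/√E` for every `t ≥ 0`. -/
theorem stmt3 (ν E ω : ℝ) (hν : 0 < ν) (hE : 0 < E) (hω : 0 ≤ ω)
    (w : ℝ)
    (hw : w = E ^ ((1 : ℝ) / 2 - ν) *
      ((E + ω) ^ (ν + 1 / 2) - E ^ ν * (E + ω) ^ ((1 : ℝ) / 2)))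
    (t : ℝ) (ht : 0 ≤ t) :
    ((t + E) ^ (-ν) - (t + E + ω) ^ (-ν)) * (t + E + ω) ^ (ν + 1 / 2)
      ≤ w / Real.sqrt E := by
  set f : ℝ → ℝ := fun s => (s ^ (-ν) - (s + ω) ^ (-ν)) * (s + ω) ^ (ν + 1 / 2) with hf
  -- Step 1: w / √E = f E
  have hrhs : w / Real.sqrt E = f E := by
    have hEω : (0:ℝ) < E + ω := by linarith
    have hu : (0:ℝ) < E ^ ν := rpow_pos_of_pos hE ν
    have hv : (0:ℝ) < (E + ω) ^ ν := rpow_pos_of_pos hEω ν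
    have hp : (0:ℝ) < E ^ ((1:ℝ)/2) := rpow_pos_of_pos hE _
    have hq : (0:ℝ) < (E + ω) ^ ((1:ℝ)/2) := rpow_pos_of_pos hEω _
    rw [hw, Real.sqrt_eq_rpow, hf]
    simp only
    rw [show (1:ℝ)/2 - ν = -ν + 1/2 by ring, Real.rpow_add hE,
      Real.rpow_add hEω ν (1/2), Real.rpow_neg hE.le, Real.rpow_neg hEω.le]
    field_simp
  rw [hrhs]
  -- derivative of f at each s > E
  have hD : ∀ s : ℝ, E < s → HasDerivAt f
      ((-ν * s ^ (-ν - 1) - 1 * (-ν) * (s + ω) ^ (-ν - 1)) * (s + ω) ^ (ν + 1/2)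
        + (s ^ (-ν) - (s + ω) ^ (-ν)) * (1 * (ν + 1/2) * (s + ω) ^ (ν + 1/2 - 1))) s := by
    intro s hsE
    have hA : (0:ℝ) < s := lt_trans hE hsE
    have hB : (0:ℝ) < s + ω := by linarith
    have d1 : HasDerivAt (fun x : ℝ => x ^ (-ν)) (-ν * s ^ (-ν - 1)) s :=
      Real.hasDerivAt_rpow_const (Or.inl hA.ne')
    have d2 : HasDerivAt (fun x : ℝ => (x + ω) ^ (-ν))
        (1 * (-ν) * (s + ω) ^ (-ν - 1)) s :=
      ((hasDerivAt_id s).add_const ω).rpow_const (Or.inl hB.ne')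
    have d3 : HasDerivAt (fun x : ℝ => (x + ω) ^ (ν + 1/2))
        (1 * (ν + 1/2) * (s + ω) ^ (ν + 1/2 - 1)) s :=
      ((hasDerivAt_id s).add_const ω).rpow_const (Or.inl hB.ne')
    exact (d1.sub d2).mul d3
  -- Step 2: f is antitone on [E, ∞)
  have key : AntitoneOn f (Ici E) := by
    apply antitoneOn_of_deriv_nonpos (convex_Ici E)
    · -- continuity
      apply ContinuousOn.mul
      · apply ContinuousOn.sub
        · exact continuousOn_id.rpow_const fun x hx =>
            Or.inl (ne_of_gt (lt_of_lt_of_le hE hx))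
        · exact (continuousOn_id.add continuousOn_const).rpow_const fun x hx =>
            Or.inl (ne_of_gt (by simp only [Pi.add_apply, id]; have := mem_Ici.mp hx; linarith))
      · exact (continuousOn_id.add continuousOn_const).rpow_const fun x hx =>
          Or.inl (ne_of_gt (by simp only [Pi.add_apply, id]; have := mem_Ici.mp hx; linarith))
    · -- differentiability on the interior
      intro s hs
      rw [interior_Ici] at hs
      exact (hD s hs).differentiableAt.differentiableWithinAt
    · -- derivative nonpositive on the interior
      intro s hs
      rw [interior_Ici] at hs
      have hsE : E < s := hs
      have hA : (0:ℝ) < s := lt_trans hE hsE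
      have hB : (0:ℝ) < s + ω := by linarith
      rw [(hD s hsE).deriv]
      -- abbreviations
      set a := s ^ ν with ha'
      set b := (s + ω) ^ ν with hb'
      set sb := (s + ω) ^ ((1:ℝ)/2) with hsb'
      have hA0 : (0:ℝ) < a := rpow_pos_of_pos hA ν
      have hB0 : (0:ℝ) < b := rpow_pos_of_pos hB ν
      have hsb0 : (0:ℝ) < sb := rpow_pos_of_pos hB _
      have hsb2 : sb * sb = s + ω := by
        rw [hsb', ← Real.rpow_add hB]; norm_num
      -- rewrite rpow expressions
      have e1 : s ^ (-ν - 1) = (a * s)⁻¹ := by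
        rw [show -ν - 1 = -(ν + 1) by ring, Real.rpow_neg hA.le,
          Real.rpow_add hA, Real.rpow_one]
      have e2 : (s + ω) ^ (-ν - 1) = (b * (s + ω))⁻¹ := by
        rw [show -ν - 1 = -(ν + 1) by ring, Real.rpow_neg hB.le,
          Real.rpow_add hB, Real.rpow_one]
      have e3 : (s + ω) ^ (ν + 1/2) = b * sb := by
        rw [Real.rpow_add hB, hb', hsb']
      have e4 : (s + ω) ^ (ν + 1/2 - 1) = b * sb / (s + ω) := by
        rw [show ν + 1/2 - 1 = ν + 1/2 + -1 by ring, Real.rpow_add hB,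
          Real.rpow_add hB, Real.rpow_neg_one, hb', hsb']; ring
      have e5 : s ^ (-ν) = a⁻¹ := by rw [Real.rpow_neg hA.le]
      have e6 : (s + ω) ^ (-ν) = b⁻¹ := by rw [Real.rpow_neg hB.le]
      rw [e1, e2, e3, e4, e5, e6]
      -- Bernoulli consequence: b * (s - ν * ω) ≤ a * s
      have hbern : b * (s - ν * ω) ≤ a * s := by
        have h1 : 1 - ν * (ω / s) ≤ (1 + ω / s) ^ (-ν) :=
          bern_neg hν (div_nonneg hω hA.le)
        have h2 : ((1 + ω / s) : ℝ) = (s + ω) / s := by field_simp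
        have h3 : ((s + ω) / s) ^ (-ν) = a / b := by
          rw [Real.div_rpow hB.le hA.le, Real.rpow_neg hB.le, Real.rpow_neg hA.le,
            ha', hb']
          field_simp
        rw [h2, h3] at h1
        calc b * (s - ν * ω) = (1 - ν * (ω / s)) * (b * s) := by field_simp
          _ ≤ (a / b) * (b * s) :=
              mul_le_mul_of_nonneg_right h1 (mul_pos hB0 hA).le
          _ = a * s := by field_simp
      -- now reduce to a polynomial inequality
      set X := (-ν * (a * s)⁻¹ - 1 * -ν * (b * (s + ω))⁻¹) * (b * sb)
        + (a⁻¹ - b⁻¹) * (1 * (ν + 1/2) * (b * sb / (s + ω))) with hX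
      have hc : (0:ℝ) < a * b * s * sb := by positivity
      have hmul : X * (a * b * s * sb) =
          (-(ν * (sb * sb)) * b * b + ν * a * b * s
            + (ν + 1/2) * s * (b - a) * b) := by
        rw [hX, ← hsb2]
        field_simp
        ring
      have hpoly : X * (a * b * s * sb) ≤ 0 := by
        rw [hmul, hsb2]
        nlinarith [mul_le_mul_of_nonneg_left hbern hB0.le,
          mul_nonneg (mul_nonneg hν.le hω) (mul_pos hB0 hB0).le]
      exact le_of_mul_le_mul_right (by rw [zero_mul]; exact hpoly) hc
  have h1 : E ∈ Ici E := self_mem_Ici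
  have h2 : t + E ∈ Ici E := by simp only [mem_Ici]; linarith
  exact key h1 h2 (by linarith)
end
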